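/- Let k be an algebraically closed field of characteristic zero, V a k-vector space of dimension d, S := k[y₁,…,yₙ], and F := S^{⊕r}. Let (x₁,…,xₙ,v₁,…,v_r) be a stable tuple, π : F → V the induced surjective S-module map with π(eⱼ) = vⱼ, and K := ker π. Then the k-vector space Hom_S(K, F/K) of S-linear maps is finite-dimensional and dim_k Hom_S(K, F/K) = r·d − d² + dim_k { (z₁,…,zₙ) ∈ End(V)ⁿ : xᵢ∘zⱼ − zⱼ∘xᵢ + zᵢ∘xⱼ − xⱼ∘zᵢ = 0 for all i,j }. -/

import Mathlib

open MvPolynomial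

/-- The Zariski tangent space to the variety of commuting tuples at a commuting tuple
`x`, i.e. the space of tuples `(z₁,…,zₙ)` of endomorphisms with
`xᵢ∘zⱼ − zⱼ∘xᵢ + zᵢ∘xⱼ − xⱼ∘zᵢ = 0` for all `i, j`. -/
def commTangentEnd (k : Type*) [Field k] {n : ℕ} {V : Type*} [AddCommGroup V] [Module k V]
    (x : Fin n → Module.End k V) : Submodule k (Fin n → Module.End k V) where
  carrier := {z | ∀ i j, x i * z j - z j * x i + z i * x j - x j * z i = 0}
  zero_mem' := by intro i j; simp
  add_mem' := by
    intro a b ha hb i j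
    have h : (x i * a j - a j * x i + a i * x j - x j * a i) +
        (x i * b j - b j * x i + b i * x j - x j * b i) = 0 := by
      rw [ha i j, hb i j, add_zero]
    calc x i * (a + b) j - (a + b) j * x i + (a + b) i * x j - x j * (a + b) i
        = (x i * a j - a j * x i + a i * x j - x j * a i) +
            (x i * b j - b j * x i + b i * x j - x j * b i) := by
          simp only [Pi.add_apply, mul_add, add_mul]; abel
      _ = 0 := h
  smul_mem' := by
    intro c z hz i j
    simp only [Pi.smul_apply, mul_smul_comm, smul_mul_assoc, ← smul_sub, ← smul_add]
    rw [hz i j, smul_zero]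

section AlgEval
variable {k : Type*} [Field k] {n : ℕ}

noncomputable def algEval {A : Type*} [Ring A] [Algebra k A] (T : Fin n → A)
    (hT : ∀ i j, Commute (T i) (T j)) : MvPolynomial (Fin n) k →ₐ[k] A :=
  letI : CommRing (Algebra.adjoin k (Set.range T)) :=
    Algebra.adjoinCommRingOfComm k (by rintro a ⟨i, rfl⟩ b ⟨j, rfl⟩; exact (hT i j).eq)
  (Algebra.adjoin k (Set.range T)).val.comp
    (MvPolynomial.aeval (R := k) fun i =>
      (⟨T i, Algebra.subset_adjoin ⟨i, rfl⟩⟩ : Algebra.adjoin k (Set.range T)))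

@[simp] lemma algEval_X {A : Type*} [Ring A] [Algebra k A] (T : Fin n → A)
    (hT : ∀ i j, Commute (T i) (T j)) (i : Fin n) : algEval T hT (X (R := k) i) = T i := by
  simp [algEval]

end AlgEval

section Tm
variable {k : Type*} [Field k] {V : Type*} [AddCommGroup V] [Module k V] {n : ℕ}

def Tm (x z : Fin n → Module.End k V) (i : Fin n) : Module.End k (V × V) :=
  LinearMap.prod ((x i) ∘ₗ LinearMap.fst k V V)
    ((z i) ∘ₗ LinearMap.fst k V V + (x i) ∘ₗ LinearMap.snd k V V)

@[simp] lemma Tm_apply (x z : Fin n → Module.End k V) (i : Fin n) (a b : V) :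
    Tm x z i (a, b) = (x i a, z i a + x i b) := rfl

lemma Tm_commute (x : Fin n → Module.End k V) (hx : ∀ i j, Commute (x i) (x j))
    {z : Fin n → Module.End k V} (hz : z ∈ commTangentEnd k x) :
    ∀ i j, Commute (Tm x z i) (Tm x z j) := by
  intro i j
  have h := hz i j
  have h2 : z i * x j + x i * z j = z j * x i + x j * z i := by
    have h3 : (z i * x j + x i * z j) - (z j * x i + x j * z i) = 0 := by rw [← h]; abel
    exact sub_eq_zero.mp h3
  have hx' := (hx i j).eq
  apply LinearMap.ext
  rintro ⟨a, b⟩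
  have e1 := DFunLike.congr_fun h2 a
  have e2 := DFunLike.congr_fun hx' b
  have e3 := DFunLike.congr_fun hx' a
  simp only [Module.End.mul_apply, LinearMap.add_apply] at e1 e2 e3
  simp only [Module.End.mul_apply, Tm_apply, map_add, Prod.mk.injEq]
  refine ⟨e3, ?_⟩
  rw [← add_assoc, ← add_assoc, add_comm (z i (x j a)) (x i (z j a)),
    add_comm (z j (x i a)) (x j (z i a))]
  rw [add_comm (x i (z j a)) (z i (x j a)), e1, e2]
  rw [add_comm (z j (x i a)) (x j (z i a))]

/-- evaluation at `x` -/
noncomputable def evx (x : Fin n → Module.End k V) (hx : ∀ i j, Commute (x i) (x j)) :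
    MvPolynomial (Fin n) k →ₐ[k] Module.End k V := algEval x hx

noncomputable def Psi (x : Fin n → Module.End k V) (hx : ∀ i j, Commute (x i) (x j))
    (z : Fin n → Module.End k V) (hz : z ∈ commTangentEnd k x) :
    MvPolynomial (Fin n) k →ₐ[k] Module.End k (V × V) :=
  algEval (Tm x z) (Tm_commute x hx hz)

noncomputable def Dz (x : Fin n → Module.End k V) (hx : ∀ i j, Commute (x i) (x j))
    (z : Fin n → Module.End k V) (hz : z ∈ commTangentEnd k x)
    (p : MvPolynomial (Fin n) k) : Module.End k V :=
  (LinearMap.snd k V V) ∘ₗ (Psi x hx z hz p) ∘ₗ (LinearMap.inl k V V)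

variable (x : Fin n → Module.End k V) (hx : ∀ i j, Commute (x i) (x j))
    (z : Fin n → Module.End k V) (hz : z ∈ commTangentEnd k x)

@[simp] lemma Psi_X (i : Fin n) : Psi x hx z hz (X i) = Tm x z i := algEval_X _ _ i

@[simp] lemma evx_X (i : Fin n) : evx x hx (X i) = x i := algEval_X _ _ i

lemma evx_C (c : k) (u : V) : evx x hx (C c) u = c • u := by
  rw [← MvPolynomial.algebraMap_eq, AlgHom.commutes, Module.algebraMap_end_apply]

lemma Psi_C (c : k) (w : V × V) : Psi x hx z hz (C c) w = c • w := by
  rw [← MvPolynomial.algebraMap_eq, AlgHom.commutes, Module.algebraMap_end_apply]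

lemma Dz_C (c : k) : Dz x hx z hz (C c) = 0 := by
  ext a
  simp [Dz, Psi_C, Prod.smul_mk]

lemma Dz_add (p q : MvPolynomial (Fin n) k) :
    Dz x hx z hz (p + q) = Dz x hx z hz p + Dz x hx z hz q := by
  ext a; simp [Dz, map_add]

lemma Dz_ksmul (c : k) (p : MvPolynomial (Fin n) k) :
    Dz x hx z hz (c • p) = c • Dz x hx z hz p := by
  ext a; simp [Dz, map_smul]

lemma Psi_apply (p : MvPolynomial (Fin n) k) (a b : V) :
    Psi x hx z hz p (a, b) = (evx x hx p a, Dz x hx z hz p a + evx x hx p b) := by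
  induction p using MvPolynomial.induction_on generalizing a b with
  | C c =>
    rw [Psi_C, Dz_C]
    simp [evx_C, Prod.smul_mk]
  | add p q hp hq =>
    rw [map_add, LinearMap.add_apply, hp, hq, Dz_add, map_add]
    simp only [LinearMap.add_apply, Prod.mk_add_mk]
    refine congrArg _ ?_
    abel
  | mul_X p i hp =>
    have hD : Dz x hx z hz (p * X i) a = Dz x hx z hz p (x i a) + evx x hx p (z i a) := by
      have h0 : Psi x hx z hz (p * X i) (a, 0) = Psi x hx z hz p (x i a, z i a) := by
        rw [map_mul, Module.End.mul_apply, Psi_X, Tm_apply, map_zero, add_zero]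
      show (Psi x hx z hz (p * X i) (a, 0)).2 = _
      rw [h0, hp]
    rw [map_mul, Module.End.mul_apply, Psi_X, Tm_apply, hp, hD]
    rw [map_mul, Module.End.mul_apply, Module.End.mul_apply, evx_X]
    rw [map_add]
    refine congrArg _ ?_
    abel

@[simp] lemma Dz_X (i : Fin n) : Dz x hx z hz (X i) = z i := by
  ext a
  show (Psi x hx z hz (X i) (a, 0)).2 = z i a
  rw [Psi_X, Tm_apply, map_zero, add_zero]

lemma Dz_mul_X (p : MvPolynomial (Fin n) k) (i : Fin n) (a : V) :
    Dz x hx z hz (p * X i) a = Dz x hx z hz p (x i a) + evx x hx p (z i a) := by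
  have h0 : Psi x hx z hz (p * X i) (a, 0) = Psi x hx z hz p (x i a, z i a) := by
    rw [map_mul, Module.End.mul_apply, Psi_X, Tm_apply, map_zero, add_zero]
  show (Psi x hx z hz (p * X i) (a, 0)).2 = _
  rw [h0, Psi_apply]

lemma Dz_addz {z z' : Fin n → Module.End k V} (hz : z ∈ commTangentEnd k x)
    (hz' : z' ∈ commTangentEnd k x)
    (hzz : z + z' ∈ commTangentEnd k x) (p : MvPolynomial (Fin n) k) :
    Dz x hx (z + z') hzz p = Dz x hx z hz p + Dz x hx z' hz' p := by
  induction p using MvPolynomial.induction_on with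
  | C c => rw [Dz_C, Dz_C, Dz_C, add_zero]
  | add p q hp hq => rw [Dz_add, Dz_add, Dz_add, hp, hq]; abel
  | mul_X p i hp =>
    ext a
    rw [LinearMap.add_apply, Dz_mul_X, Dz_mul_X, Dz_mul_X, hp]
    simp only [Pi.add_apply, LinearMap.add_apply, map_add]
    abel

lemma Dz_smulz {z : Fin n → Module.End k V} (hz : z ∈ commTangentEnd k x)
    (c : k) (hcz : c • z ∈ commTangentEnd k x) (p : MvPolynomial (Fin n) k) :
    Dz x hx (c • z) hcz p = c • Dz x hx z hz p := by
  induction p using MvPolynomial.induction_on with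
  | C c' => rw [Dz_C, Dz_C, smul_zero]
  | add p q hp hq => rw [Dz_add, Dz_add, hp, hq, smul_add]
  | mul_X p i hp =>
    ext a
    rw [LinearMap.smul_apply, Dz_mul_X, Dz_mul_X, hp]
    simp only [Pi.smul_apply, LinearMap.smul_apply, map_smul, smul_add]

variable {r : ℕ}

noncomputable def piSum (v : Fin r → V) : (Fin r → MvPolynomial (Fin n) k) →ₗ[k] V where
  toFun f := ∑ j, evx x hx (f j) (v j)
  map_add' f g := by
    simp only [Pi.add_apply, map_add, LinearMap.add_apply, Finset.sum_add_distrib]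
  map_smul' c f := by
    simp only [Pi.smul_apply, map_smul, LinearMap.smul_apply, Finset.smul_sum,
      RingHom.id_apply]

@[simp] lemma piSum_apply (v : Fin r → V) (f : Fin r → MvPolynomial (Fin n) k) :
    piSum x hx v f = ∑ j, evx x hx (f j) (v j) := rfl

noncomputable def muMap (v w : Fin r → V) : (Fin r → MvPolynomial (Fin n) k) →ₗ[k] V where
  toFun f := ∑ j, (Dz x hx z hz (f j) (v j) + evx x hx (f j) (w j))
  map_add' f g := by
    simp only [Pi.add_apply, map_add, Dz_add, LinearMap.add_apply]
    rw [← Finset.sum_add_distrib]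
    exact Finset.sum_congr rfl fun j _ => by abel
  map_smul' c f := by
    simp only [Pi.smul_apply, map_smul, Dz_ksmul, LinearMap.smul_apply, Finset.smul_sum,
      RingHom.id_apply, smul_add]

@[simp] lemma muMap_apply (v w : Fin r → V) (f : Fin r → MvPolynomial (Fin n) k) :
    muMap x hx z hz v w f = ∑ j, (Dz x hx z hz (f j) (v j) + evx x hx (f j) (w j)) := rfl

lemma piSum_muMap (v w : Fin r → V) (f : Fin r → MvPolynomial (Fin n) k) :
    (piSum x hx v f, muMap x hx z hz v w f) = ∑ j, Psi x hx z hz (f j) (v j, w j) := by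
  have h1 : (∑ j, Psi x hx z hz (f j) (v j, w j)) =
      ∑ j, ((evx x hx (f j)) (v j), Dz x hx z hz (f j) (v j) + evx x hx (f j) (w j)) :=
    Finset.sum_congr rfl fun j _ => Psi_apply x hx z hz _ _ _
  rw [h1]
  refine Prod.ext ?_ ?_
  · rw [Prod.fst_sum, piSum_apply]
  · rw [Prod.snd_sum, muMap_apply]

lemma muMap_smul (v w : Fin r → V) (p : MvPolynomial (Fin n) k)
    (f : Fin r → MvPolynomial (Fin n) k) :
    muMap x hx z hz v w (p • f) = Dz x hx z hz p (piSum x hx v f)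
      + evx x hx p (muMap x hx z hz v w f) := by
  have key : (piSum x hx v (p • f), muMap x hx z hz v w (p • f))
      = Psi x hx z hz p (piSum x hx v f, muMap x hx z hz v w f) := by
    rw [piSum_muMap, piSum_muMap, map_sum]
    refine Finset.sum_congr rfl fun j _ => ?_
    rw [Pi.smul_apply, smul_eq_mul, map_mul, Module.End.mul_apply]
  have h2 := congrArg Prod.snd key
  rw [Psi_apply] at h2
  exact h2

lemma piSum_smulP {z : Fin n → Module.End k V} (hz : z ∈ commTangentEnd k x)
    (v : Fin r → V) (p : MvPolynomial (Fin n) k)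
    (f : Fin r → MvPolynomial (Fin n) k) :
    piSum x hx v (p • f) = evx x hx p (piSum x hx v f) := by
  have key : (piSum x hx v (p • f), muMap x hx z hz v 0 (p • f))
      = Psi x hx z hz p (piSum x hx v f, muMap x hx z hz v 0 f) := by
    rw [piSum_muMap, piSum_muMap, map_sum]
    refine Finset.sum_congr rfl fun j _ => ?_
    rw [Pi.smul_apply, smul_eq_mul, map_mul, Module.End.mul_apply]
  have h2 := congrArg Prod.fst key
  rw [Psi_apply] at h2
  exact h2

lemma Dz_one : Dz x hx z hz 1 = 0 := by
  have := Dz_C x hx z hz (1 : k)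
  rwa [map_one] at this

lemma Dz_zero : Dz x hx z hz 0 = 0 := by
  have := Dz_C x hx z hz (0 : k)
  rwa [map_zero] at this

@[simp] lemma piSum_single (v : Fin r → V) (j : Fin r) :
    piSum x hx v (Pi.single j 1) = v j := by
  rw [piSum_apply, Finset.sum_eq_single j]
  · rw [Pi.single_eq_same, map_one, Module.End.one_apply]
  · intro j' _ hj'
    rw [Pi.single_eq_of_ne hj', map_zero, LinearMap.zero_apply]
  · simp

@[simp] lemma muMap_single (v w : Fin r → V) (j : Fin r) :
    muMap x hx z hz v w (Pi.single j 1) = w j := by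
  rw [muMap_apply, Finset.sum_eq_single j]
  · rw [Pi.single_eq_same, Dz_one, LinearMap.zero_apply, map_one, Module.End.one_apply, zero_add]
  · intro j' _ hj'
    rw [Pi.single_eq_of_ne hj', Dz_zero, map_zero, LinearMap.zero_apply, LinearMap.zero_apply,
      add_zero]
  · simp

lemma muMap_add_zw {z z' : Fin n → Module.End k V} (hz : z ∈ commTangentEnd k x)
    (hz' : z' ∈ commTangentEnd k x) (hzz : z + z' ∈ commTangentEnd k x)
    (v w w' : Fin r → V) (f : Fin r → MvPolynomial (Fin n) k) :
    muMap x hx (z + z') hzz v (w + w') f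
      = muMap x hx z hz v w f + muMap x hx z' hz' v w' f := by
  simp only [muMap_apply, Dz_addz x hx hz hz' hzz, LinearMap.add_apply, Pi.add_apply, map_add]
  rw [← Finset.sum_add_distrib]
  exact Finset.sum_congr rfl fun j _ => by abel

lemma muMap_smul_zw {z : Fin n → Module.End k V} (hz : z ∈ commTangentEnd k x)
    (c : k) (hcz : c • z ∈ commTangentEnd k x)
    (v w : Fin r → V) (f : Fin r → MvPolynomial (Fin n) k) :
    muMap x hx (c • z) hcz v (c • w) f = c • muMap x hx z hz v w f := by
  simp only [muMap_apply, Dz_smulz x hx hz c hcz, LinearMap.smul_apply, Pi.smul_apply, map_smul,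
    Finset.smul_sum, smul_add]

noncomputable def lsmX {r : ℕ} (i : Fin n) :
    (Fin r → MvPolynomial (Fin n) k) →ₗ[k] (Fin r → MvPolynomial (Fin n) k) where
  toFun f := (X i : MvPolynomial (Fin n) k) • f
  map_add' a b := smul_add _ a b
  map_smul' c a := by
    rw [RingHom.id_apply]
    exact smul_comm _ c a

lemma linmap_eq_of (A B : (Fin r → MvPolynomial (Fin n) k) →ₗ[k] V)
    (hsingle : ∀ j, A (Pi.single j 1) = B (Pi.single j 1))
    (hstep : ∀ (i : Fin n) (f : Fin r → MvPolynomial (Fin n) k), A f = B f →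
      A ((X i : MvPolynomial (Fin n) k) • f) = B ((X i : MvPolynomial (Fin n) k) • f)) :
    ∀ f, A f = B f := by
  have main : ∀ (p : MvPolynomial (Fin n) k) (f : Fin r → MvPolynomial (Fin n) k),
      A f = B f → A (p • f) = B (p • f) := by
    intro p
    induction p using MvPolynomial.induction_on with
    | C c =>
      intro f hf
      rw [← MvPolynomial.algebraMap_eq, algebraMap_smul, map_smul, map_smul, hf]
    | add p q hp hq =>
      intro f hf
      rw [add_smul, map_add, map_add, hp f hf, hq f hf]
    | mul_X p i hp =>
      intro f hf
      rw [mul_smul]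
      exact hp _ (hstep i f hf)
  intro f
  have hf : (∑ j, (f j) • (Pi.single j 1 : Fin r → MvPolynomial (Fin n) k)) = f := by
    have h0 : ∀ j, (f j) • (Pi.single j 1 : Fin r → MvPolynomial (Fin n) k) = Pi.single j (f j) := by
      intro j
      funext j'
      rcases eq_or_ne j' j with rfl | hne
      · simp only [Pi.smul_apply, Pi.single_eq_same, smul_eq_mul, mul_one]
      · simp only [Pi.smul_apply, Pi.single_eq_of_ne hne, smul_eq_mul, mul_zero]
    rw [Finset.sum_congr rfl fun j _ => h0 j, Finset.univ_sum_single]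
  have hsum : A (∑ j, (f j) • (Pi.single j 1 : Fin r → MvPolynomial (Fin n) k))
      = B (∑ j, (f j) • (Pi.single j 1 : Fin r → MvPolynomial (Fin n) k)) := by
    rw [map_sum, map_sum]
    exact Finset.sum_congr rfl fun j _ => main (f j) _ (hsingle j)
  rwa [hf] at hsum

end Tm

section Theta
variable {k : Type*} [Field k] {V : Type*} [AddCommGroup V] [Module k V] {n r : ℕ}
variable (x : Fin n → Module.End k V) (hx : ∀ i j, Commute (x i) (x j))
variable (K : Submodule (MvPolynomial (Fin n) k) (Fin r → MvPolynomial (Fin n) k))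
variable (φ : ((Fin r → MvPolynomial (Fin n) k) ⧸ K) ≃ₗ[k] V)

noncomputable def thetaHom (z : Fin n → Module.End k V) (hz : z ∈ commTangentEnd k x)
    (v w : Fin r → V)
    (hev : ∀ (p : MvPolynomial (Fin n) k) (u : (Fin r → MvPolynomial (Fin n) k) ⧸ K),
      φ (p • u) = evx x hx p (φ u))
    (hpi : ∀ f, φ (Submodule.Quotient.mk f) = piSum x hx v f) :
    ↥K →ₗ[MvPolynomial (Fin n) k] ((Fin r → MvPolynomial (Fin n) k) ⧸ K) where
  toFun f := φ.symm (muMap x hx z hz v w f.1)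
  map_add' f g := by
    simp only [Submodule.coe_add, map_add]
  map_smul' p f := by
    have h1 : ((p • f : ↥K) : Fin r → MvPolynomial (Fin n) k)
        = p • (f : Fin r → MvPolynomial (Fin n) k) := rfl
    simp only [RingHom.id_apply]
    rw [h1, muMap_smul]
    have h0 : piSum x hx v (f : Fin r → MvPolynomial (Fin n) k) = 0 := by
      rw [← hpi, (Submodule.Quotient.mk_eq_zero K).mpr f.2, map_zero]
    rw [h0, map_zero, zero_add]
    apply φ.injective
    rw [LinearEquiv.apply_symm_apply, hev, LinearEquiv.apply_symm_apply]

@[simp] lemma thetaHom_apply (z : Fin n → Module.End k V) (hz : z ∈ commTangentEnd k x)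
    (v w : Fin r → V) (hev) (hpi) (f : ↥K) :
    thetaHom x hx K φ z hz v w hev hpi f = φ.symm (muMap x hx z hz v w f.1) := rfl

end Theta

section Extra
variable {k : Type*} [Field k] {V : Type*} [AddCommGroup V] [Module k V] {n : ℕ}

lemma bracket_mem (x : Fin n → Module.End k V) (hx : ∀ i j, Commute (x i) (x j))
    (g : Module.End k V) :
    (fun i => g * x i - x i * g) ∈ commTangentEnd k x := by
  intro i j
  show x i * (g * x j - x j * g) - (g * x j - x j * g) * x i
      + (g * x i - x i * g) * x j - x j * (g * x i - x i * g) = 0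
  have e := (hx i j).eq
  have h1 : x i * (g * x j - x j * g) - (g * x j - x j * g) * x i
      + (g * x i - x i * g) * x j - x j * (g * x i - x i * g)
      = (g * (x i * x j) - g * (x j * x i)) + ((x j * x i) * g - (x i * x j) * g) := by
    noncomm_ring
  rw [h1, e]
  abel

end Extra

set_option maxHeartbeats 3200000 in
/-- for a stable tuple with associated kernel `K = ker π`, the tangent space
`Hom_S(K, F/K)` to the Quot scheme is finite dimensional over `k`, of dimension
`r·d − d² + dim(tangent space to the commuting variety at x)`. -/
theorem finrank_hom_K_quot (k : Type*) [Field k] [IsAlgClosed k] [CharZero k]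
    (V : Type*) [AddCommGroup V] [Module k V] [FiniteDimensional k V]
    (d n r : ℕ) (hd : Module.finrank k V = d)
    (x : Fin n → Module.End k V) (hx : ∀ i j, Commute (x i) (x j))
    (v : Fin r → V)
    (hstab : ∀ W : Submodule k V, (∀ j, v j ∈ W) → (∀ i, ∀ w ∈ W, x i w ∈ W) → W = ⊤)
    (K : Submodule (MvPolynomial (Fin n) k) (Fin r → MvPolynomial (Fin n) k))
    (φ : ((Fin r → MvPolynomial (Fin n) k) ⧸ K) ≃ₗ[k] V)
    (hφ1 : ∀ j, φ (Submodule.Quotient.mk (Pi.single j 1)) = v j)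
    (hφ2 : ∀ (i : Fin n) (q : (Fin r → MvPolynomial (Fin n) k) ⧸ K),
      φ ((MvPolynomial.X i : MvPolynomial (Fin n) k) • q) = x i (φ q)) :
    @FiniteDimensional k (RestrictScalars k (MvPolynomial (Fin n) k)
        (↥K →ₗ[MvPolynomial (Fin n) k] ((Fin r → MvPolynomial (Fin n) k) ⧸ K))) _ _
        (@RestrictScalars.module _ _ _ _ _ _ _ LinearMap.module) ∧
      (Module.finrank k (RestrictScalars k (MvPolynomial (Fin n) k)
          (↥K →ₗ[MvPolynomial (Fin n) k] ((Fin r → MvPolynomial (Fin n) k) ⧸ K))) : ℤ) =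
        (r : ℤ) * d - (d : ℤ) ^ 2 +
          Module.finrank k ↥(commTangentEnd k x) := by
  classical
  -- `φ` intertwines polynomial action with evaluation
  have hev : ∀ (p : MvPolynomial (Fin n) k) (u : (Fin r → MvPolynomial (Fin n) k) ⧸ K),
      φ (p • u) = evx x hx p (φ u) := by
    intro p
    induction p using MvPolynomial.induction_on with
    | C c =>
      intro u
      rw [← MvPolynomial.algebraMap_eq, algebraMap_smul, map_smul, AlgHom.commutes,
        Module.algebraMap_end_apply]
    | add p q hp hq =>
      intro u
      rw [add_smul, map_add, hp, hq, map_add, LinearMap.add_apply]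
    | mul_X p i hp =>
      intro u
      rw [mul_smul, hp, hφ2, map_mul, Module.End.mul_apply, evx_X]
  have hpi : ∀ f : Fin r → MvPolynomial (Fin n) k,
      φ (Submodule.Quotient.mk f) = piSum x hx v f := by
    intro f
    have hrep : (∑ j, (f j) • (Pi.single j 1 : Fin r → MvPolynomial (Fin n) k)) = f := by
      have h0 : ∀ j, (f j) • (Pi.single j 1 : Fin r → MvPolynomial (Fin n) k)
          = Pi.single j (f j) := by
        intro j
        funext j'
        rcases eq_or_ne j' j with rfl | hne
        · simp only [Pi.smul_apply, Pi.single_eq_same, smul_eq_mul, mul_one]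
        · simp only [Pi.smul_apply, Pi.single_eq_of_ne hne, smul_eq_mul, mul_zero]
      rw [Finset.sum_congr rfl fun j _ => h0 j, Finset.univ_sum_single]
    have h2 : φ (Submodule.Quotient.mk
        (∑ j, (f j) • (Pi.single j 1 : Fin r → MvPolynomial (Fin n) k)))
        = ∑ j, evx x hx (f j) (v j) := by
      rw [← Submodule.mkQ_apply, map_sum, map_sum]
      refine Finset.sum_congr rfl fun j _ => ?_
      rw [map_smul, Submodule.mkQ_apply, hev, hφ1]
    rw [hrep] at h2
    rw [h2, piSum_apply]
  have hKpi : ∀ f : Fin r → MvPolynomial (Fin n) k, f ∈ K ↔ piSum x hx v f = 0 := by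
    intro f
    rw [← hpi]
    constructor
    · intro h
      rw [(Submodule.Quotient.mk_eq_zero K).mpr h, map_zero]
    · intro h
      exact (Submodule.Quotient.mk_eq_zero K).mp (φ.map_eq_zero_iff.mp h)
  have hπsurj : Function.Surjective (piSum x hx v) := by
    intro u
    obtain ⟨q, rfl⟩ := φ.surjective u
    obtain ⟨f, rfl⟩ := Submodule.Quotient.mk_surjective K q
    exact ⟨f, (hpi f).symm⟩
  have hXpi : ∀ (i : Fin n) (f : Fin r → MvPolynomial (Fin n) k),
      piSum x hx v ((X i : MvPolynomial (Fin n) k) • f) = x i (piSum x hx v f) := by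
    intro i f
    rw [piSum_smulP x hx (Submodule.zero_mem (commTangentEnd k x)) v, evx_X]
  have hmuX : ∀ {z : Fin n → Module.End k V} (hz : z ∈ commTangentEnd k x) (w : Fin r → V)
      (i : Fin n) (f : Fin r → MvPolynomial (Fin n) k),
      muMap x hx z hz v w ((X i : MvPolynomial (Fin n) k) • f)
        = z i (piSum x hx v f) + x i (muMap x hx z hz v w f) := by
    intro z hz w i f
    rw [muMap_smul, Dz_X, evx_X]
  -- the main linear map Φ
  obtain ⟨Φ, hΦ⟩ : ∃ Φ : (↥(commTangentEnd k x) × (Fin r → V)) →ₗ[k]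
      (↥K →ₗ[MvPolynomial (Fin n) k] ((Fin r → MvPolynomial (Fin n) k) ⧸ K)),
      ∀ (zw : ↥(commTangentEnd k x) × (Fin r → V)) (f : ↥K),
        Φ zw f = φ.symm (muMap x hx zw.1.1 zw.1.2 v zw.2 f.1) := by
    refine ⟨{ toFun := fun zw => thetaHom x hx K φ zw.1.1 zw.1.2 v zw.2 hev hpi,
              map_add' := ?_, map_smul' := ?_ }, fun zw f => rfl⟩
    · intro a b
      apply LinearMap.ext
      intro f
      show thetaHom x hx K φ (a.1.1 + b.1.1) (a.1 + b.1).2 v (a.2 + b.2) hev hpi f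
          = (thetaHom x hx K φ a.1.1 a.1.2 v a.2 hev hpi
            + thetaHom x hx K φ b.1.1 b.1.2 v b.2 hev hpi) f
      rw [LinearMap.add_apply, thetaHom_apply, thetaHom_apply, thetaHom_apply,
        muMap_add_zw x hx a.1.2 b.1.2 (a.1 + b.1).2 v a.2 b.2, map_add]
    · intro c a
      apply LinearMap.ext
      intro f
      show thetaHom x hx K φ (c • a.1.1) (c • a.1).2 v (c • a.2) hev hpi f
          = ((RingHom.id k) c • thetaHom x hx K φ a.1.1 a.1.2 v a.2 hev hpi) f
      rw [LinearMap.smul_apply, thetaHom_apply, thetaHom_apply,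
        muMap_smul_zw x hx a.1.2 c (c • a.1).2 v a.2, RingHom.id_apply, map_smul]
  -- surjectivity of Φ
  have hsurj : Function.Surjective Φ := by
    intro Θ
    -- splitting of piSum
    obtain ⟨s, hs⟩ := (piSum x hx v).exists_rightInverse_of_surjective
      (LinearMap.range_eq_top.mpr hπsurj)
    have hsapp : ∀ u, piSum x hx v (s u) = u := fun u => by
      rw [← LinearMap.comp_apply, hs, LinearMap.id_apply]
    have hsK : ∀ f : Fin r → MvPolynomial (Fin n) k, f - s (piSum x hx v f) ∈ K := by
      intro f
      rw [hKpi, map_sub, hsapp, sub_self]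
    -- extension of Θ to all of F
    obtain ⟨θt, hθt⟩ : ∃ θt : (Fin r → MvPolynomial (Fin n) k) →ₗ[k] V,
        ∀ f, θt f = φ (Θ ⟨f - s (piSum x hx v f), hsK f⟩) := by
      refine ⟨{ toFun := fun f => φ (Θ ⟨f - s (piSum x hx v f), hsK f⟩),
                map_add' := ?_, map_smul' := ?_ }, fun f => rfl⟩
      · intro a b
        have harg : (⟨a + b - s (piSum x hx v (a + b)), hsK _⟩ : ↥K)
            = ⟨a - s (piSum x hx v a), hsK a⟩ + ⟨b - s (piSum x hx v b), hsK b⟩ := by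
          apply Subtype.ext
          show a + b - s (piSum x hx v (a + b))
              = (a - s (piSum x hx v a)) + (b - s (piSum x hx v b))
          rw [map_add, map_add]
          abel
        show φ (Θ ⟨a + b - s (piSum x hx v (a + b)), hsK _⟩)
            = φ (Θ ⟨a - s (piSum x hx v a), hsK a⟩) + φ (Θ ⟨b - s (piSum x hx v b), hsK b⟩)
        rw [harg, map_add, map_add]
      · intro c f
        have harg : (⟨c • f - s (piSum x hx v (c • f)), hsK _⟩ : ↥K)
            = c • (⟨f - s (piSum x hx v f), hsK f⟩ : ↥K) := by
          apply Subtype.ext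
          show c • f - s (piSum x hx v (c • f)) = c • (f - s (piSum x hx v f))
          rw [map_smul, map_smul, smul_sub]
        show φ (Θ ⟨c • f - s (piSum x hx v (c • f)), hsK _⟩)
            = c • φ (Θ ⟨f - s (piSum x hx v f), hsK f⟩)
        rw [harg, ← algebraMap_smul (MvPolynomial (Fin n) k) c
          (⟨f - s (piSum x hx v f), hsK f⟩ : ↥K), map_smul, algebraMap_smul, map_smul]
    have hθtK : ∀ (g : Fin r → MvPolynomial (Fin n) k) (hg : g ∈ K),
        θt g = φ (Θ ⟨g, hg⟩) := by
      intro g hg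
      rw [hθt]
      congr 2
      apply Subtype.ext
      show g - s (piSum x hx v g) = g
      rw [(hKpi g).mp hg, map_zero, sub_zero]
    have hθtX : ∀ (i : Fin n) (g : Fin r → MvPolynomial (Fin n) k) (hg : g ∈ K),
        θt ((X i : MvPolynomial (Fin n) k) • g) = x i (θt g) := by
      intro i g hg
      rw [hθtK _ (K.smul_mem _ hg), hθtK g hg]
      have harg : (⟨(X i : MvPolynomial (Fin n) k) • g, K.smul_mem _ hg⟩ : ↥K)
          = (X i : MvPolynomial (Fin n) k) • (⟨g, hg⟩ : ↥K) := rfl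
      rw [harg, map_smul, hφ2]
    -- construct the tangent data
    obtain ⟨zfun, hzfun⟩ : ∃ zf : Fin n → Module.End k V, ∀ (i : Fin n) (u : V),
        zf i u = θt ((X i : MvPolynomial (Fin n) k) • s u) - x i (θt (s u)) :=
      ⟨fun i => (θt ∘ₗ lsmX i - (x i) ∘ₗ θt) ∘ₗ s, fun i u => rfl⟩
    have hzpi : ∀ (i : Fin n) (f : Fin r → MvPolynomial (Fin n) k),
        zfun i (piSum x hx v f) = θt ((X i : MvPolynomial (Fin n) k) • f) - x i (θt f) := by
      intro i f
      have hgK := hsK f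
      rw [hzfun]
      have e2 : (X i : MvPolynomial (Fin n) k) • s (piSum x hx v f)
          = (X i : MvPolynomial (Fin n) k) • f
            - (X i : MvPolynomial (Fin n) k) • (f - s (piSum x hx v f)) := by
        rw [← smul_sub, sub_sub_cancel]
      have e3 : s (piSum x hx v f) = f - (f - s (piSum x hx v f)) := (sub_sub_cancel f _).symm
      rw [e2, map_sub, hθtX i _ hgK, e3]
      simp only [map_sub]
      abel
    have hzmem : zfun ∈ commTangentEnd k x := by
      intro i j
      apply LinearMap.ext
      intro u
      obtain ⟨f, rfl⟩ := hπsurj u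
      have e1 : zfun j (x i (piSum x hx v f))
          = θt ((X j : MvPolynomial (Fin n) k) • (X i : MvPolynomial (Fin n) k) • f)
            - x j (θt ((X i : MvPolynomial (Fin n) k) • f)) := by
        rw [← hXpi i f, hzpi j]
      have e2 : zfun i (x j (piSum x hx v f))
          = θt ((X i : MvPolynomial (Fin n) k) • (X j : MvPolynomial (Fin n) k) • f)
            - x i (θt ((X j : MvPolynomial (Fin n) k) • f)) := by
        rw [← hXpi j f, hzpi i]
      have e3 := hzpi i f
      have e4 := hzpi j f
      have e5 : ((X i : MvPolynomial (Fin n) k) • (X j : MvPolynomial (Fin n) k) • f)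
          = (X j : MvPolynomial (Fin n) k) • (X i : MvPolynomial (Fin n) k) • f := by
        rw [smul_smul, smul_smul, mul_comm]
      have e7 : x i (x j (θt f)) = x j (x i (θt f)) := LinearMap.congr_fun (hx i j).eq (θt f)
      simp only [LinearMap.sub_apply, LinearMap.add_apply, Module.End.mul_apply,
        LinearMap.zero_apply]
      rw [e1, e2, e3, e4, map_sub, map_sub, e5, e7]
      abel
    refine ⟨(⟨zfun, hzmem⟩, fun j => θt (Pi.single j 1)), ?_⟩
    have hall := linmap_eq_of θt
      (muMap x hx zfun hzmem v (fun j => θt (Pi.single j 1)))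
      (fun j => by rw [muMap_single]) ?_
    · apply LinearMap.ext
      intro f
      rw [hΦ, ← hall f.1, hθtK f.1 f.2]
      simp only [Subtype.coe_eta]
      exact φ.symm_apply_apply _
    · intro i f hf
      have hstep1 : θt ((X i : MvPolynomial (Fin n) k) • f)
          = zfun i (piSum x hx v f) + x i (θt f) := by
        rw [hzpi]
        abel
      rw [hstep1, hmuX hzmem _ i f, hf]
  -- the kernel of Φ is the image of End V
  obtain ⟨α, hα⟩ : ∃ α : Module.End k V →ₗ[k] (↥(commTangentEnd k x) × (Fin r → V)),
      ∀ g : Module.End k V,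
        α g = (⟨fun i => g * x i - x i * g, bracket_mem x hx g⟩, fun j => g (v j)) := by
    refine ⟨{ toFun := fun g => (⟨fun i => g * x i - x i * g, bracket_mem x hx g⟩,
        fun j => g (v j)), map_add' := ?_, map_smul' := ?_ }, fun g => rfl⟩
    · intro a b
      refine Prod.ext (Subtype.ext ?_) ?_
      · funext i
        show (a + b) * x i - x i * (a + b) = (a * x i - x i * a) + (b * x i - x i * b)
        noncomm_ring
      · funext j
        rfl
    · intro c a
      refine Prod.ext (Subtype.ext ?_) ?_
      · funext i
        show (c • a) * x i - x i * (c • a) = c • (a * x i - x i * a)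
        rw [smul_mul_assoc, mul_smul_comm, smul_sub]
      · funext j
        rfl
  have hαinj : Function.Injective α := by
    intro g g' hgg
    have h0 : α (g - g') = 0 := by rw [map_sub, hgg, sub_self]
    rw [hα] at h0
    have h1 : (fun i => (g - g') * x i - x i * (g - g')) = 0 :=
      congrArg (fun q => (Subtype.val q.1)) h0
    have h2 : (fun j => (g - g') (v j)) = 0 := congrArg Prod.snd h0
    have hker : LinearMap.ker (g - g') = ⊤ := by
      apply hstab
      · intro j
        exact LinearMap.mem_ker.mpr (congrFun h2 j)
      · intro i w hw
        have hcomm := congrFun h1 i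
        have : (g - g') * x i = x i * (g - g') := by
          have := sub_eq_zero.mp (by exact hcomm)
          exact this
        have happ := LinearMap.congr_fun this w
        simp only [Module.End.mul_apply] at happ
        rw [LinearMap.mem_ker] at hw ⊢
        rw [happ, hw, map_zero]
    have : g - g' = 0 := LinearMap.ker_eq_top.mp hker
    exact sub_eq_zero.mp this
  have hker : LinearMap.ker Φ = LinearMap.range α := by
    -- splitting again
    obtain ⟨s, hs⟩ := (piSum x hx v).exists_rightInverse_of_surjective
      (LinearMap.range_eq_top.mpr hπsurj)
    have hsapp : ∀ u, piSum x hx v (s u) = u := fun u => by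
      rw [← LinearMap.comp_apply, hs, LinearMap.id_apply]
    have hsK : ∀ f : Fin r → MvPolynomial (Fin n) k, f - s (piSum x hx v f) ∈ K := by
      intro f
      rw [hKpi, map_sub, hsapp, sub_self]
    apply le_antisymm
    · rintro ⟨⟨z, hz⟩, w⟩ hzw
      rw [LinearMap.mem_ker] at hzw
      have h0 := hzw
      have hmu0 : ∀ (g : Fin r → MvPolynomial (Fin n) k), g ∈ K →
          muMap x hx z hz v w g = 0 := by
        intro g hg
        have := LinearMap.congr_fun h0 ⟨g, hg⟩
        rw [hΦ, LinearMap.zero_apply] at this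
        have := congrArg φ this
        rwa [LinearEquiv.apply_symm_apply, map_zero] at this
      have hgpi : ∀ f, (muMap x hx z hz v w ∘ₗ s) (piSum x hx v f)
          = muMap x hx z hz v w f := by
        intro f
        have : muMap x hx z hz v w (s (piSum x hx v f))
            = muMap x hx z hz v w (f - (f - s (piSum x hx v f))) := by
          rw [sub_sub_cancel]
        rw [LinearMap.comp_apply, this, map_sub, hmu0 _ (hsK f), sub_zero]
      refine ⟨muMap x hx z hz v w ∘ₗ s, ?_⟩
      rw [hα]
      refine Prod.ext (Subtype.ext ?_) ?_
      · show (fun i => (muMap x hx z hz v w ∘ₗ s) * x i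
            - x i * (muMap x hx z hz v w ∘ₗ s)) = z
        funext i
        apply LinearMap.ext
        intro u
        obtain ⟨f, rfl⟩ := hπsurj u
        simp only [LinearMap.sub_apply, Module.End.mul_apply]
        rw [← hXpi i f, hgpi, hgpi, hmuX hz w i f]
        abel
      · show (fun j => (muMap x hx z hz v w ∘ₗ s) (v j)) = w
        funext j
        rw [← piSum_single x hx v j, hgpi, muMap_single]
    · rintro zw ⟨g, rfl⟩
      rw [LinearMap.mem_ker, hα]
      have hall := linmap_eq_of
        (muMap x hx (fun i => g * x i - x i * g) (bracket_mem x hx g) v (fun j => g (v j)))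
        (g ∘ₗ piSum x hx v)
        (fun j => by rw [muMap_single, LinearMap.comp_apply, piSum_single]) ?_
      · apply LinearMap.ext
        intro f
        rw [hΦ, LinearMap.zero_apply]
        have h1 := hall f.1
        rw [LinearMap.comp_apply, (hKpi f.1).mp f.2, map_zero] at h1
        rw [h1, map_zero]
      · intro i f hf
        rw [hmuX (bracket_mem x hx g) _ i f, hf]
        simp only [LinearMap.comp_apply]
        rw [hXpi i f]
        simp only [LinearMap.sub_apply, Module.End.mul_apply]
        abel
  -- dimension count
  have hFDA : FiniteDimensional k
      (↥K →ₗ[MvPolynomial (Fin n) k] ((Fin r → MvPolynomial (Fin n) k) ⧸ K)) :=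
    Module.Finite.of_surjective Φ hsurj
  have heq : ∀ (c : k) (a : ↥K →ₗ[MvPolynomial (Fin n) k]
      ((Fin r → MvPolynomial (Fin n) k) ⧸ K)),
      c • a = algebraMap k (MvPolynomial (Fin n) k) c • a := by
    intro c a
    apply LinearMap.ext
    intro f
    rw [LinearMap.smul_apply, LinearMap.smul_apply, algebraMap_smul]
  let e : (↥K →ₗ[MvPolynomial (Fin n) k] ((Fin r → MvPolynomial (Fin n) k) ⧸ K)) ≃ₗ[k]
      (RestrictScalars k (MvPolynomial (Fin n) k)
        (↥K →ₗ[MvPolynomial (Fin n) k] ((Fin r → MvPolynomial (Fin n) k) ⧸ K))) :=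
    { toFun := fun a => a, invFun := fun a => a,
      left_inv := fun _ => rfl, right_inv := fun _ => rfl,
      map_add' := fun _ _ => rfl,
      map_smul' := fun c a => by rw [RingHom.id_apply]; exact heq c a }
  have hFD : @FiniteDimensional k (RestrictScalars k (MvPolynomial (Fin n) k)
      (↥K →ₗ[MvPolynomial (Fin n) k] ((Fin r → MvPolynomial (Fin n) k) ⧸ K))) _ _
      (@RestrictScalars.module _ _ _ _ _ _ _ LinearMap.module) :=
    @Module.Finite.equiv _ _ _ _ _ _ _ (_) hFDA e
  refine ⟨hFD, ?_⟩
  have hfr : Module.finrank k (RestrictScalars k (MvPolynomial (Fin n) k)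
      (↥K →ₗ[MvPolynomial (Fin n) k] ((Fin r → MvPolynomial (Fin n) k) ⧸ K)))
      = Module.finrank k
        (↥K →ₗ[MvPolynomial (Fin n) k] ((Fin r → MvPolynomial (Fin n) k) ⧸ K)) :=
    (LinearEquiv.finrank_eq e).symm
  have hrn := LinearMap.finrank_range_add_finrank_ker Φ
  rw [LinearMap.range_eq_top.mpr hsurj, finrank_top, hker,
    LinearMap.finrank_range_of_inj hαinj] at hrn
  have hEnd : Module.finrank k (Module.End k V) = d * d := by
    rw [show Module.finrank k (Module.End k V) = Module.finrank k V * Module.finrank k V from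
      Module.finrank_linearMap k k V V, hd]
  have hM : Module.finrank k (↥(commTangentEnd k x) × (Fin r → V))
      = Module.finrank k ↥(commTangentEnd k x) + r * d := by
    rw [Module.finrank_prod, Module.finrank_pi_fintype]
    simp [hd, Finset.sum_const, Finset.card_univ, mul_comm]
  rw [hEnd, hM] at hrn
  have hd2 : ((d : ℤ)) ^ 2 = (d : ℤ) * (d : ℤ) := by ring
  have hcast : (Module.finrank k
      (↥K →ₗ[MvPolynomial (Fin n) k] ((Fin r → MvPolynomial (Fin n) k) ⧸ K)) : ℤ)
      + (d : ℤ) * d = (Module.finrank k ↥(commTangentEnd k x) : ℤ) + (r : ℤ) * d := by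
    exact_mod_cast hrn
  rw [hfr, hd2]
  linarith
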